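/- Let ρ₀ and ρ₁ be density matrices on a finite-dimensional complex Hilbert space and let Π be a Hermitian matrix with 0 ≤ Π ≤ I (i.e., Π and I - Π are positive semidefinite). Then Tr(Πρ₀) - Tr(Πρ₁) ≤ (1/2)·Tr|ρ₀ - ρ₁|. (Holevo–Helstrom bound: the bias of any two-outcome measurement is at most the trace distance.) -/

import Mathlib

open scoped ComplexOrder

lemma diag_re_nonneg {n : Type*} [Fintype n] [DecidableEq n] {M : Matrix n n ℂ}
    (hM : M.PosSemidef) (j : n) : 0 ≤ (M j j).re := by
  have := hM.re_dotProduct_nonneg (Pi.single j 1)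
  simpa [dotProduct, Matrix.mulVec, Pi.single_apply, Finset.sum_ite_eq] using this

theorem stmt_15 {n : Type*} [Fintype n] [DecidableEq n] (ρ₀ ρ₁ P : Matrix n n ℂ)
    (h₀ : ρ₀.PosSemidef) (h₁ : ρ₁.PosSemidef)
    (t₀ : ρ₀.trace = 1) (t₁ : ρ₁.trace = 1)
    (hP : P.PosSemidef) (hP' : ((1 : Matrix n n ℂ) - P).PosSemidef)
    (hΔ : (ρ₀ - ρ₁).IsHermitian) :
    ((P * ρ₀).trace - (P * ρ₁).trace).re ≤ (1 / 2 : ℝ) * ∑ j, |hΔ.eigenvalues j| := by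
  set U : Matrix n n ℂ := (hΔ.eigenvectorUnitary : Matrix n n ℂ) with hU
  set lam : n → ℝ := hΔ.eigenvalues with hlam
  have hUU : (star U) * U = 1 := (Matrix.mem_unitaryGroup_iff').mp hΔ.eigenvectorUnitary.2
  set Q : Matrix n n ℂ := (star U) * P * U with hQ
  have hQpsd : Q.PosSemidef := by
    simpa [hQ, Matrix.star_eq_conjTranspose] using hP.conjTranspose_mul_mul_same U
  have hQpsd' : ((1 : Matrix n n ℂ) - Q).PosSemidef := by
    have : (star U) * ((1 : Matrix n n ℂ) - P) * U = 1 - Q := by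
      rw [Matrix.mul_sub, Matrix.sub_mul, Matrix.mul_one, hUU, hQ]
    have h2 := hP'.conjTranspose_mul_mul_same U
    rw [Matrix.star_eq_conjTranspose] at this
    rwa [this] at h2
  -- diagonal entries of Q between 0 and 1
  have hq0 : ∀ j, 0 ≤ (Q j j).re := fun j => diag_re_nonneg hQpsd j
  have hq1 : ∀ j, (Q j j).re ≤ 1 := by
    intro j
    have := diag_re_nonneg hQpsd' j
    have h1 : ((1 : Matrix n n ℂ) - Q) j j = 1 - Q j j := by
      simp [Matrix.sub_apply, Matrix.one_apply]
    rw [h1] at this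
    simp at this
    linarith
  -- trace computation
  have key : (P * ρ₀).trace - (P * ρ₁).trace = ∑ j, (lam j : ℂ) * Q j j := by
    have hΔeq : ρ₀ - ρ₁ = U * Matrix.diagonal (RCLike.ofReal ∘ lam) * (star U) :=
      hΔ.spectral_theorem
    calc (P * ρ₀).trace - (P * ρ₁).trace
        = (P * (ρ₀ - ρ₁)).trace := by rw [Matrix.mul_sub, Matrix.trace_sub]
      _ = (P * (U * Matrix.diagonal (RCLike.ofReal ∘ lam) * (star U))).trace := by rw [← hΔeq]
      _ = (Q * Matrix.diagonal (RCLike.ofReal ∘ lam)).trace := by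
          have e1 : P * (U * Matrix.diagonal (RCLike.ofReal ∘ lam) * star U)
              = (P * (U * Matrix.diagonal (RCLike.ofReal ∘ lam))) * star U := by
            noncomm_ring
          rw [e1, Matrix.trace_mul_cycle]
          congr 1
          rw [hQ]
          noncomm_ring
      _ = ∑ j, (lam j : ℂ) * Q j j := by
          rw [Matrix.trace]
          congr 1; funext j
          simp [Matrix.diag, Matrix.mul_apply, Matrix.diagonal_apply, Finset.sum_ite_eq,
            mul_comm]
  -- sum of eigenvalues is zero
  have hsum0 : ∑ j, lam j = 0 := by
    have htr : (ρ₀ - ρ₁).trace = ∑ j, (lam j : ℂ) := by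
      conv_lhs => rw [show ρ₀ - ρ₁ = U * Matrix.diagonal (RCLike.ofReal ∘ lam) * (star U) from hΔ.spectral_theorem]
      rw [Matrix.trace_mul_comm, ← Matrix.mul_assoc, hUU, Matrix.one_mul,
        Matrix.trace_diagonal]
      simp
    rw [Matrix.trace_sub, t₀, t₁, sub_self] at htr
    have := congrArg Complex.re htr.symm
    simpa [Complex.ofReal_re] using this
  -- real part bound
  have hre : ((P * ρ₀).trace - (P * ρ₁).trace).re = ∑ j, lam j * (Q j j).re := by
    rw [key, Complex.re_sum]
    congr 1; funext j
    simp [Complex.mul_re, Complex.ofReal_re, Complex.ofReal_im]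
  rw [hre]
  have step : ∑ j, lam j * (Q j j).re ≤ ∑ j, max (lam j) 0 := by
    apply Finset.sum_le_sum
    intro j _
    rcases le_or_gt 0 (lam j) with h | h
    · calc lam j * (Q j j).re ≤ lam j * 1 := by
            exact mul_le_mul_of_nonneg_left (hq1 j) h
        _ = lam j := mul_one _
        _ ≤ max (lam j) 0 := le_max_left _ _
    · calc lam j * (Q j j).re ≤ 0 := mul_nonpos_of_nonpos_of_nonneg h.le (hq0 j)
        _ ≤ max (lam j) 0 := le_max_right _ _
  refine step.trans ?_
  have hmax : ∀ j, max (lam j) 0 = (|lam j| + lam j) / 2 := by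
    intro j
    rcases le_or_gt 0 (lam j) with h | h
    · rw [max_eq_left h, abs_of_nonneg h]; ring
    · rw [max_eq_right h.le, abs_of_neg h]; ring
  calc ∑ j, max (lam j) 0 = ∑ j, (|lam j| + lam j) / 2 := by simp_rw [hmax]
    _ = (∑ j, |lam j| + ∑ j, lam j) / 2 := by
        rw [← Finset.sum_add_distrib, ← Finset.sum_div]
    _ = (1 / 2 : ℝ) * ∑ j, |lam j| := by rw [hsum0]; ring
    _ ≤ (1 / 2 : ℝ) * ∑ j, |lam j| := le_rfl
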